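/- (Hölder perturbation of likelihood-ratio second moments, part ii) Under the same hypotheses (h ≥ ρ pointwise and |h(x;θ₁) − h(x;θ₂)| ≤ L|θ₁ − θ₂|^{1+k} for all x), for any θ₁, θ₂, θ_j: E_{θ₂}[W_{j2}²] ≤ E_{θ₁}[W_{j1}²]·(1 + (L/ρ)|θ₁ − θ₂|^{1+k}). -/

import Mathlib

open MeasureTheory

/-- Hölder perturbation of likelihood-ratio second moments, part (ii): under
`h(x;θ) ≥ ρ > 0` pointwise and `|h(x;θ₁) − h(x;θ₂)| ≤ L|θ₁ − θ₂|^{1+k}` for all `x`,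
`E_{θ₂}[W_{j2}²] ≤ E_{θ₁}[W_{j1}²]·(1 + (L/ρ)|θ₁ − θ₂|^{1+k})`, where
`W_{jb} = h(·;θ_j)/h(·;θ_b)` and `E_{θ_b}` integrates against density `h(·;θ_b)`. -/
theorem lr_second_moment_holder_perturbation_ii {α : Type*} [MeasurableSpace α]
    (μ : Measure α) (θ₁ θ₂ θj L ρ k : ℝ) (hL : 0 < L) (hρ : 0 < ρ) (hk : 0 < k)
    (h1 h2 hj : α → ℝ)
    (hmeas1 : Measurable h1) (hmeas2 : Measurable h2) (hmeasj : Measurable hj)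
    (hlb1 : ∀ x, ρ ≤ h1 x) (hlb2 : ∀ x, ρ ≤ h2 x) (hlbj : ∀ x, ρ ≤ hj x)
    (hholder : ∀ x, |h1 x - h2 x| ≤ L * |θ₁ - θ₂| ^ (1 + k))
    (hWj1sq : Integrable (fun x => (hj x / h1 x) ^ 2 * h1 x) μ) :
    ∫ x, (hj x / h2 x) ^ 2 * h2 x ∂μ
      ≤ (∫ x, (hj x / h1 x) ^ 2 * h1 x ∂μ)
          * (1 + (L / ρ) * |θ₁ - θ₂| ^ (1 + k)) := by
  set C : ℝ := 1 + (L / ρ) * |θ₁ - θ₂| ^ (1 + k) with hC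
  have hC1 : (1 : ℝ) ≤ C := by
    rw [hC]
    have : 0 ≤ (L / ρ) * |θ₁ - θ₂| ^ (1 + k) := by positivity
    linarith
  have hC0 : 0 ≤ C := by linarith
  have key : ∀ x, (hj x / h2 x) ^ 2 * h2 x ≤ ((hj x / h1 x) ^ 2 * h1 x) * C := by
    intro x
    have h1p : 0 < h1 x := lt_of_lt_of_le hρ (hlb1 x)
    have h2p : 0 < h2 x := lt_of_lt_of_le hρ (hlb2 x)
    have hjp : 0 < hj x := lt_of_lt_of_le hρ (hlbj x)
    have e2 : (hj x / h2 x) ^ 2 * h2 x = hj x ^ 2 / h2 x := by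
      field_simp
    have e1 : (hj x / h1 x) ^ 2 * h1 x = hj x ^ 2 / h1 x := by
      field_simp
    rw [e1, e2]
    have hratio : h1 x / h2 x ≤ C := by
      have : h1 x / h2 x = 1 + (h1 x - h2 x) / h2 x := by field_simp; ring
      rw [this, hC]
      have hle : (h1 x - h2 x) / h2 x ≤ (L / ρ) * |θ₁ - θ₂| ^ (1 + k) := by
        rw [div_mul_eq_mul_div]
        calc (h1 x - h2 x) / h2 x ≤ |h1 x - h2 x| / ρ :=
              div_le_div₀ (abs_nonneg _) (le_abs_self _) hρ (hlb2 x)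
          _ ≤ (L * |θ₁ - θ₂| ^ (1 + k)) / ρ := by
              gcongr
              exact hholder x
      linarith
    have : hj x ^ 2 / h2 x = (hj x ^ 2 / h1 x) * (h1 x / h2 x) := by
      field_simp
    rw [this]
    exact mul_le_mul_of_nonneg_left hratio (by positivity)
  have hRHSint : Integrable (fun x => ((hj x / h1 x) ^ 2 * h1 x) * C) μ :=
    hWj1sq.mul_const C
  have hLHSint : Integrable (fun x => (hj x / h2 x) ^ 2 * h2 x) μ := by
    refine hRHSint.mono ?_ ?_
    · exact (((hmeasj.div hmeas2).pow_const 2).mul hmeas2).aestronglyMeasurable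
    · refine Filter.Eventually.of_forall fun x => ?_
      have h2p : 0 < h2 x := lt_of_lt_of_le hρ (hlb2 x)
      have h1p : 0 < h1 x := lt_of_lt_of_le hρ (hlb1 x)
      rw [Real.norm_eq_abs, Real.norm_eq_abs, abs_of_nonneg (by positivity),
        abs_of_nonneg (by positivity)]
      exact key x
  calc ∫ x, (hj x / h2 x) ^ 2 * h2 x ∂μ
      ≤ ∫ x, ((hj x / h1 x) ^ 2 * h1 x) * C ∂μ :=
        integral_mono hLHSint hRHSint key
    _ = (∫ x, (hj x / h1 x) ^ 2 * h1 x ∂μ) * C := integral_mul_const _ _
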